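/- arXiv:0805.1345 — 4 statements merged into one kernel-verified Lean document; each statement's English description precedes it below -/
import Mathlib

section
/- Let p be a prime, r ≥ 1 an integer, and d₁, …, d_r positive integers such that p does not divide d_i for at least one i; set d = d₁ + ⋯ + d_r. Then for every integer δ ≥ (p−1)(d−1) − 1, the number of tuples (i₀, i₁, …, i_r) ∈ ℕ^{r+1} with 0 ≤ i_j ≤ p−1 for j = 1, …, r and p·i₀ + Σ_{j=1}^r i_j·d_j ≤ δ satisfies: 2·(this number) = p^{r−1}·(2(δ+1) − (p−1)(d−1)). -/
lemma aux_count (p : ℕ) (hp : 0 < p) (t : ℤ) (m : ℕ) :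
    (p : ℤ) * m ≤ t ↔ m < (t / p + 1).toNat := by
  rw [mul_comm, ← Int.le_ediv_iff_mul_le (by exact_mod_cast hp)]
  omega

lemma aux_sum_emod (p : ℕ) (hp : p.Prime) (u : ℕ) (hu : ¬ p ∣ u) (c : ℤ) :
    ∑ a : Fin p, (c - (a : ℤ) * u) % (p : ℤ) = ∑ a : Fin p, (a : ℤ) := by
  have hp0 : 0 < (p : ℤ) := by exact_mod_cast hp.pos
  have hφlt : ∀ a : Fin p, ((c - (a : ℤ) * u) % (p : ℤ)).toNat < p := by
    intro a
    have h1 := Int.emod_nonneg (c - (a : ℤ) * u) (by positivity)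
    have h2 := Int.emod_lt_of_pos (c - (a : ℤ) * u) hp0
    omega
  set φ : Fin p → Fin p := fun a => ⟨((c - (a : ℤ) * u) % (p : ℤ)).toNat, hφlt a⟩ with hφ
  have hinj : Function.Injective φ := by
    intro a b hab
    have h : (c - (a : ℤ) * u) % (p : ℤ) = (c - (b : ℤ) * u) % (p : ℤ) := by
      have h1 := Int.emod_nonneg (c - (a : ℤ) * u) (by positivity : (p:ℤ) ≠ 0)
      have h2 := Int.emod_nonneg (c - (b : ℤ) * u) (by positivity : (p:ℤ) ≠ 0)
      have := congrArg Fin.val hab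
      simp only [hφ] at this
      omega
    have hdvd : (p : ℤ) ∣ ((b : ℤ) - (a : ℤ)) * u := by
      have := Int.emod_eq_emod_iff_emod_sub_eq_zero.mp h
      have := Int.dvd_of_emod_eq_zero this
      have heq : (c - (a : ℤ) * u) - (c - (b : ℤ) * u) = ((b : ℤ) - (a : ℤ)) * u := by ring
      rwa [heq] at this
    have hpi : Prime (p : ℤ) := Nat.prime_iff_prime_int.mp hp
    have hdvd2 : (p : ℤ) ∣ ((b : ℤ) - (a : ℤ)) := by
      rcases hpi.dvd_mul.mp hdvd with h' | h'
      · exact h'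
      · exact absurd (Int.ofNat_dvd.mp (by exact_mod_cast h')) hu
    have hz : (b : ℤ) - (a : ℤ) = 0 := by
      apply Int.eq_zero_of_abs_lt_dvd hdvd2
      rw [abs_lt]
      have := a.isLt; have := b.isLt
      constructor <;> [push_cast; push_cast] <;> omega
    have : (a : ℕ) = (b : ℕ) := by omega
    exact Fin.ext this
  have hbij : Function.Bijective φ := Finite.injective_iff_bijective.mp hinj
  refine Fintype.sum_bijective φ hbij _ _ ?_
  intro a
  have h1 := Int.emod_nonneg (c - (a : ℤ) * u) (by positivity : (p:ℤ) ≠ 0)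
  simp only [hφ]
  omega

lemma aux_card_ne {r : ℕ} (p : ℕ) (i₀ : Fin r) :
    Fintype.card ({j : Fin r // j ≠ i₀} → Fin p) = p ^ (r - 1) := by
  rw [Fintype.card_fun, Fintype.card_fin]
  congr 1
  rw [Fintype.card_subtype_compl, Fintype.card_subtype_eq, Fintype.card_fin]

lemma aux_sum_eval {r p : ℕ} (j : Fin r) (g : Fin p → ℤ) :
    ∑ i : Fin r → Fin p, g (i j) = (p : ℤ) ^ (r - 1) * ∑ a : Fin p, g a := by
  rw [← Equiv.sum_comp (Equiv.funSplitAt j (Fin p)).symm (fun i => g (i j))]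
  have hev : ∀ x : Fin p × ({k : Fin r // k ≠ j} → Fin p),
      (Equiv.funSplitAt j (Fin p)).symm x j = x.1 := by
    intro x
    simp [Equiv.funSplitAt, Equiv.piSplitAt_symm_apply]
  simp only [hev]
  rw [Fintype.sum_prod_type_right]
  have h2 : ∀ y : {k : Fin r // k ≠ j} → Fin p, ∑ x : Fin p, g ((x, y).1) = ∑ a : Fin p, g a :=
    fun y => rfl
  rw [Finset.sum_congr rfl (fun y _ => h2 y), Finset.sum_const, Finset.card_univ, aux_card_ne,
    nsmul_eq_mul]
  push_cast
  ring

/-- Let `p` be a prime, `r ≥ 1`, and `d₁, …, d_r` positive integers with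
`p ∤ dᵢ` for at least one `i`; set `d = d₁ + ⋯ + d_r`. Then for every integer
`δ ≥ (p-1)(d-1) - 1`, twice the number of tuples `(i₀, i₁, …, i_r) ∈ ℕ^{r+1}` with
`0 ≤ i_j ≤ p-1` for `j = 1, …, r` and `p·i₀ + Σ_j i_j·d_j ≤ δ` equals
`p^(r-1)·(2(δ+1) - (p-1)(d-1))`. -/
theorem card_monomials_superelliptic (p : ℕ) (hp : p.Prime) (r : ℕ) (hr : 1 ≤ r)
    (dv : Fin r → ℕ) (hdv : ∀ j, 0 < dv j) (hnd : ∃ i, ¬ (p ∣ dv i))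
    (d : ℕ) (hd : d = ∑ j, dv j) (δ : ℤ) (hδ : ((p : ℤ) - 1) * ((d : ℤ) - 1) - 1 ≤ δ) :
    2 * (Nat.card {x : ℕ × (Fin r → ℕ) //
        (∀ j, x.2 j ≤ p - 1) ∧ ((p : ℤ) * x.1 + ∑ j, (x.2 j : ℤ) * (dv j : ℤ)) ≤ δ} : ℤ)
      = (p : ℤ) ^ (r - 1) * (2 * (δ + 1) - ((p : ℤ) - 1) * ((d : ℤ) - 1)) := by
  obtain ⟨i₀, hi₀⟩ := hnd
  have hp1 : 0 < p := hp.pos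
  have hp0 : ((p : ℤ)) ≠ 0 := by positivity
  have hdc : (d : ℤ) = ∑ j, (dv j : ℤ) := by rw [hd]; push_cast; rfl
  set s : (Fin r → Fin p) → ℤ := fun i => ∑ j, ((i j : ℕ) : ℤ) * (dv j : ℤ) with hs
  set F : (Fin r → Fin p) → ℕ := fun i => ((δ - s i) / p + 1).toNat with hFdef
  -- the equivalence
  have e : {x : ℕ × (Fin r → ℕ) //
        (∀ j, x.2 j ≤ p - 1) ∧ ((p : ℤ) * x.1 + ∑ j, (x.2 j : ℤ) * (dv j : ℤ)) ≤ δ}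
      ≃ Σ i : Fin r → Fin p, Fin (F i) := by
    refine ⟨fun x => ⟨fun j => ⟨x.1.2 j, by have := x.2.1 j; omega⟩,
        ⟨x.1.1, ?_⟩⟩, fun y => ⟨(y.2.1, fun j => (y.1 j : ℕ)),
        ⟨fun j => by show (y.1 j : ℕ) ≤ p - 1; have := (y.1 j).isLt; omega, ?_⟩⟩,
        fun x => rfl, fun y => rfl⟩
    · rw [← aux_count p hp1]
      have hx := x.2.2
      have hseq : s (fun j => (⟨x.1.2 j, by have := x.2.1 j; omega⟩ : Fin p))
          = ∑ j, (x.1.2 j : ℤ) * (dv j : ℤ) := rfl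
      rw [hseq]
      linarith
    · have hm := (aux_count p hp1 (δ - s y.1) y.2.1).mpr y.2.2
      have hseq : ∑ j, (((y.1 j : ℕ) : ℤ)) * (dv j : ℤ) = s y.1 := rfl
      rw [hseq]
      linarith
  have hcard : (Nat.card {x : ℕ × (Fin r → ℕ) //
        (∀ j, x.2 j ≤ p - 1) ∧ ((p : ℤ) * x.1 + ∑ j, (x.2 j : ℤ) * (dv j : ℤ)) ≤ δ})
      = ∑ i : Fin r → Fin p, F i := by
    rw [Nat.card_congr e, Nat.card_eq_fintype_card, Fintype.card_sigma]
    simp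
  -- bound on s
  have hsle : ∀ i : Fin r → Fin p, s i ≤ ((p : ℤ) - 1) * d := by
    intro i
    have hterm : ∀ j, ((i j : ℕ) : ℤ) * dv j ≤ ((p : ℤ) - 1) * dv j := by
      intro j
      apply mul_le_mul_of_nonneg_right _ (by positivity)
      have := (i j).isLt
      have h2 : ((i j : ℕ) : ℤ) < p := by exact_mod_cast this
      linarith
    calc s i ≤ ∑ j, ((p : ℤ) - 1) * dv j := Finset.sum_le_sum (fun j _ => hterm j)
      _ = ((p : ℤ) - 1) * ∑ j, (dv j : ℤ) := by rw [Finset.mul_sum]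
      _ = ((p : ℤ) - 1) * d := by rw [← hdc]
  -- per term value
  have hF : ∀ i : Fin r → Fin p, (p : ℤ) * (F i : ℤ)
      = (δ - s i) + 1 + ((p : ℤ) - 1 - (δ - s i) % p) := by
    intro i
    have hts : -(p : ℤ) ≤ δ - s i := by
      have hexp : ((p : ℤ) - 1) * ((d : ℤ) - 1) = ((p : ℤ) - 1) * d - ((p : ℤ) - 1) := by ring
      have := hsle i
      linarith
    set t := δ - s i with ht
    have h1 : 0 ≤ t % p := Int.emod_nonneg t hp0
    have h2 : t % p < p := Int.emod_lt_of_pos t (by positivity)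
    have h3 : (p : ℤ) * (t / p) + t % p = t := Int.mul_ediv_add_emod t p
    have h4 : -1 ≤ t / p := by
      by_contra hc
      push_neg at hc
      have hle : t / p ≤ -2 := by omega
      have : (p : ℤ) * (t / p) ≤ (p : ℤ) * (-2) :=
        mul_le_mul_of_nonneg_left hle (by positivity)
      linarith
    have hgoal : (F i : ℤ) = t / p + 1 := by
      simp only [hFdef, ← ht]
      rw [Int.toNat_of_nonneg (by omega)]
    rw [hgoal]
    linear_combination h3
  set A : ℤ := ∑ a : Fin p, (a : ℤ) with hAdef
  have hA : 2 * A = (p : ℤ) * ((p : ℤ) - 1) := by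
    have h0 := Finset.sum_range_id_mul_two p
    zify [hp.one_le] at h0
    push_cast at h0
    have h3 : A = ∑ i ∈ Finset.range p, (i : ℤ) := by
      rw [hAdef, Fin.sum_univ_eq_sum_range (fun i => (i : ℤ)) p]
    rw [h3]
    linarith
  -- sum of s
  have hssum : ∑ i : Fin r → Fin p, s i = (p : ℤ) ^ (r - 1) * (A * d) := by
    simp only [hs]
    rw [Finset.sum_comm]
    rw [Finset.sum_congr rfl (fun j _ => aux_sum_eval j (fun a : Fin p => ((a : ℕ) : ℤ) * dv j))]
    have h1 : ∀ j : Fin r, ∑ a : Fin p, ((a : ℕ) : ℤ) * dv j = A * dv j := by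
      intro j
      rw [hAdef, Finset.sum_mul]
    rw [Finset.sum_congr rfl (fun j _ => by rw [h1 j])]
    rw [← Finset.mul_sum, ← Finset.mul_sum, ← hdc]
  -- sum of emods
  have hsplit : ∀ (a : Fin p) (rest : {j : Fin r // j ≠ i₀} → Fin p),
      s ((Equiv.funSplitAt i₀ (Fin p)).symm (a, rest))
        = ((a : ℕ) : ℤ) * dv i₀ + ∑ j : {j : Fin r // j ≠ i₀}, ((rest j : ℕ) : ℤ) * dv j := by
    intro a rest
    simp only [hs]
    rw [Fintype.sum_eq_add_sum_compl i₀]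
    congr 1
    · congr 1
      simp [Equiv.funSplitAt, Equiv.piSplitAt_symm_apply]
    · have hst := Finset.sum_subtype (s := ({i₀}ᶜ : Finset (Fin r))) (p := fun j => j ≠ i₀) (F := inferInstance)
        (fun x => by simp)
        (fun i => ((((Equiv.funSplitAt i₀ (Fin p)).symm (a, rest)) i : ℕ) : ℤ) * dv i)
      rw [hst]
      apply Finset.sum_congr rfl
      intro j _
      congr 2
      simp [Equiv.funSplitAt, Equiv.piSplitAt_symm_apply, j.2]
  have hmod : ∑ i : Fin r → Fin p, (δ - s i) % p = (p : ℤ) ^ (r - 1) * A := by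
    rw [← Equiv.sum_comp (Equiv.funSplitAt i₀ (Fin p)).symm (fun i => (δ - s i) % (p : ℤ))]
    rw [Fintype.sum_prod_type_right]
    have hin : ∀ rest : {j : Fin r // j ≠ i₀} → Fin p,
        ∑ a : Fin p, (δ - s ((Equiv.funSplitAt i₀ (Fin p)).symm ((a, rest).1, (a, rest).2))) % (p : ℤ) = A := by
      intro rest
      have hb : ∀ a : Fin p,
          δ - s ((Equiv.funSplitAt i₀ (Fin p)).symm (a, rest))
            = (δ - ∑ j : {j : Fin r // j ≠ i₀}, ((rest j : ℕ) : ℤ) * dv j) - (a : ℤ) * (dv i₀) := by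
        intro a
        rw [hsplit a rest]
        ring
      calc ∑ a : Fin p, (δ - s ((Equiv.funSplitAt i₀ (Fin p)).symm (a, rest))) % (p : ℤ)
          = ∑ a : Fin p, ((δ - ∑ j : {j : Fin r // j ≠ i₀}, ((rest j : ℕ) : ℤ) * dv j)
              - (a : ℤ) * (dv i₀)) % (p : ℤ) :=
            Finset.sum_congr rfl (fun a _ => by rw [hb a])
        _ = A := aux_sum_emod p hp (dv i₀) hi₀ _
    calc ∑ rest : {j : Fin r // j ≠ i₀} → Fin p, ∑ a : Fin p,
          (δ - s ((Equiv.funSplitAt i₀ (Fin p)).symm (a, rest))) % (p : ℤ)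
        = ∑ _rest : {j : Fin r // j ≠ i₀} → Fin p, A :=
          Finset.sum_congr rfl (fun rest _ => hin rest)
      _ = (p : ℤ) ^ (r - 1) * A := by
          rw [Finset.sum_const, Finset.card_univ, aux_card_ne, nsmul_eq_mul]
          push_cast
          ring
  have hppow : ((p : ℤ)) ^ r = (p : ℤ) * (p : ℤ) ^ (r - 1) := by
    conv_lhs => rw [show r = (r - 1) + 1 by omega]
    rw [pow_succ]
    ring
  rw [hcard]
  have hcast : ((∑ i : Fin r → Fin p, F i : ℕ) : ℤ) = ∑ i : Fin r → Fin p, (F i : ℤ) := by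
    push_cast; rfl
  rw [hcast]
  apply mul_left_cancel₀ hp0
  calc (p : ℤ) * (2 * ∑ i : Fin r → Fin p, (F i : ℤ))
      = 2 * ∑ i : Fin r → Fin p, ((p : ℤ) * (F i : ℤ)) := by
        rw [mul_left_comm, Finset.mul_sum]
    _ = 2 * ∑ i : Fin r → Fin p, ((δ + (p : ℤ)) - s i - (δ - s i) % p) := by
        have hcg := Finset.sum_congr rfl (fun i (_ : i ∈ Finset.univ) =>
          (by rw [hF i]; ring :
            (p : ℤ) * (F i : ℤ) = (δ + (p : ℤ)) - s i - (δ - s i) % p))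
        rw [hcg]
    _ = 2 * ((p : ℤ) ^ r * (δ + (p : ℤ)) - ∑ i : Fin r → Fin p, s i
          - ∑ i : Fin r → Fin p, (δ - s i) % p) := by
        rw [Finset.sum_sub_distrib, Finset.sum_sub_distrib, Finset.sum_const, Finset.card_univ]
        have hcf : Fintype.card (Fin r → Fin p) = p ^ r := by
          simp [Fintype.card_fun]
        rw [hcf, nsmul_eq_mul]
        push_cast
        ring
    _ = 2 * ((p : ℤ) ^ r * (δ + p) - (p : ℤ) ^ (r - 1) * (A * d) - (p : ℤ) ^ (r - 1) * A) := by
        rw [hssum, hmod]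
    _ = (p : ℤ) * ((p : ℤ) ^ (r - 1) * (2 * (δ + 1) - ((p : ℤ) - 1) * ((d : ℤ) - 1))) := by
        rw [hppow]
        linear_combination (-((p : ℤ) ^ (r - 1) * d) - (p : ℤ) ^ (r - 1)) * hA
end

section
/- Let p be a prime, r ≥ 1 an integer, and d₁, …, d_r positive integers such that p divides d_i for every i = 1, …, r; set d = d₁ + ⋯ + d_r. Then for every nonnegative integer δ with p·⌊δ/p⌋ ≥ (p−1)(d−2) − 1, the number of tuples (i₀, i₁, …, i_r) ∈ ℕ^{r+1} with 0 ≤ i_j ≤ p−1 for j = 1, …, r and p·i₀ + Σ_{j=1}^r i_j·d_j ≤ δ satisfies: 2·(this number) = p^{r−1}·(2(p·⌊δ/p⌋ + 1) − (p−1)(d−2)). -/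
private def sigmaFlip (p : ℕ) {r : ℕ} (i : Fin r → ℕ) : Fin r → ℕ := fun j => p - 1 - i j

/-- Let `p` be a prime, `r ≥ 1`, and `d₁, …, d_r` positive integers with
`p ∣ dᵢ` for every `i`; set `d = d₁ + ⋯ + d_r`. Then for every nonnegative integer `δ` with
`p·⌊δ/p⌋ ≥ (p-1)(d-2) - 1`, twice the number of tuples `(i₀, i₁, …, i_r) ∈ ℕ^{r+1}` with
`0 ≤ i_j ≤ p-1` for `j = 1, …, r` and `p·i₀ + Σ_j i_j·d_j ≤ δ` equals
`p^(r-1)·(2(p·⌊δ/p⌋ + 1) - (p-1)(d-2))`. -/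
theorem card_monomials_superelliptic_of_dvd (p : ℕ) (hp : p.Prime) (r : ℕ) (hr : 1 ≤ r)
    (dv : Fin r → ℕ) (hdv : ∀ j, 0 < dv j) (hpd : ∀ i, p ∣ dv i)
    (d : ℕ) (hd : d = ∑ j, dv j) (δ : ℕ)
    (hδ : ((p : ℤ) - 1) * ((d : ℤ) - 2) - 1 ≤ (p : ℤ) * ((δ / p : ℕ) : ℤ)) :
    2 * (Nat.card {x : ℕ × (Fin r → ℕ) //
        (∀ j, x.2 j ≤ p - 1) ∧ p * x.1 + ∑ j, x.2 j * dv j ≤ δ} : ℤ)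
      = (p : ℤ) ^ (r - 1) * (2 * ((p : ℤ) * ((δ / p : ℕ) : ℤ) + 1) - ((p : ℤ) - 1) * ((d : ℤ) - 2)) := by
  classical
  have hp1 : 1 ≤ p := hp.one_lt.le
  set m := δ / p with hm
  set e : Fin r → ℕ := fun j => dv j / p with he
  have hde : ∀ j, dv j = p * e j := fun j => (Nat.mul_div_cancel' (hpd j)).symm
  have hdE : d = p * ∑ j, e j := by
    rw [hd, Finset.mul_sum]; exact Finset.sum_congr rfl fun j _ => hde j
  have hdZ : (d : ℤ) = (p : ℤ) * ∑ j, (e j : ℤ) := by rw [hdE]; push_cast; ring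
  set T : Finset (Fin r → ℕ) := Fintype.piFinset fun _ => Finset.range p with hT
  have hmemT : ∀ i : Fin r → ℕ, i ∈ T ↔ ∀ j, i j < p := by
    intro i; simp [hT, Fintype.mem_piFinset]
  have hcond : ∀ x : ℕ × (Fin r → ℕ),
      (p * x.1 + ∑ j, x.2 j * dv j ≤ δ) ↔ x.1 + ∑ j, x.2 j * e j ≤ m := by
    intro x
    have hrw : p * x.1 + ∑ j, x.2 j * dv j = (x.1 + ∑ j, x.2 j * e j) * p := by
      simp only [hde]
      rw [add_mul, Finset.sum_mul, mul_comm p x.1]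
      congr 1
      exact Finset.sum_congr rfl fun j _ => by ring
    rw [hrw, ← Nat.le_div_iff_mul_le hp.pos]
  have key : ((p : ℤ) - 1) * (∑ j, (e j : ℤ)) ≤ (m : ℤ) + 1 := by
    rw [hdZ] at hδ
    nlinarith [show (2 : ℤ) ≤ p from by exact_mod_cast hp.two_le]
  have keyN : (p - 1) * (∑ j, e j) ≤ m + 1 := by
    zify [hp1]; push_cast at key ⊢; linarith
  have hbound : ∀ i ∈ T, (∑ j, i j * e j) ≤ m + 1 := by
    intro i hi
    calc (∑ j, i j * e j) ≤ ∑ j, (p - 1) * e j := by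
          apply Finset.sum_le_sum
          intro j _
          exact Nat.mul_le_mul_right _ (by have := (hmemT i).1 hi j; omega)
      _ = (p - 1) * ∑ j, e j := (Finset.mul_sum _ _ _).symm
      _ ≤ m + 1 := keyN
  set S : Finset (ℕ × (Fin r → ℕ)) :=
    ((Finset.range (m + 1)) ×ˢ T).filter (fun x => x.1 + ∑ j, x.2 j * e j ≤ m) with hS
  have hiff : ∀ x : ℕ × (Fin r → ℕ),
      ((∀ j, x.2 j ≤ p - 1) ∧ p * x.1 + ∑ j, x.2 j * dv j ≤ δ) ↔ x ∈ S := by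
    intro x
    rw [hcond x]
    simp only [hS, Finset.mem_filter, Finset.mem_product, Finset.mem_range, hmemT]
    constructor
    · rintro ⟨h1, h2⟩
      exact ⟨⟨by omega, fun j => by have := h1 j; omega⟩, h2⟩
    · rintro ⟨⟨h0, h1⟩, h2⟩
      exact ⟨fun j => by have := h1 j; omega, h2⟩
  have hcard : (Nat.card {x : ℕ × (Fin r → ℕ) //
      (∀ j, x.2 j ≤ p - 1) ∧ p * x.1 + ∑ j, x.2 j * dv j ≤ δ}) = S.card := by
    rw [Nat.card_congr (Equiv.subtypeEquivRight hiff)]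
    simp [Nat.card_eq_fintype_card]
  have hfiber : ∀ i ∈ T, S.filter (fun x => x.2 = i)
      = (Finset.range (m + 1 - ∑ j, i j * e j)) ×ˢ ({i} : Finset (Fin r → ℕ)) := by
    intro i hi
    ext ⟨a, b⟩
    simp only [hS, Finset.mem_filter, Finset.mem_product, Finset.mem_range,
      Finset.mem_singleton]
    constructor
    · rintro ⟨⟨⟨ha, hb⟩, hab⟩, rfl⟩
      exact ⟨by omega, rfl⟩
    · rintro ⟨ha, rfl⟩
      have hs := hbound b hi
      exact ⟨⟨⟨by omega, hi⟩, by omega⟩, rfl⟩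
  have hScard : S.card = ∑ i ∈ T, (m + 1 - ∑ j, i j * e j) := by
    rw [Finset.card_eq_sum_card_fiberwise (f := Prod.snd) (t := T)
      (fun x hx => by
        simp only [hS, Finset.mem_coe, Finset.mem_filter, Finset.mem_product] at hx
        exact hx.1.2)]
    refine Finset.sum_congr rfl fun i hi => ?_
    rw [hfiber i hi, Finset.card_product, Finset.card_range, Finset.card_singleton, mul_one]
  set f : (Fin r → ℕ) → ℤ := fun i => (m : ℤ) + 1 - ∑ j, (i j : ℤ) * (e j : ℤ) with hf
  have hcast : (S.card : ℤ) = ∑ i ∈ T, f i := by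
    rw [hScard, Nat.cast_sum]
    refine Finset.sum_congr rfl fun i hi => ?_
    rw [Nat.cast_sub (hbound i hi)]
    simp only [hf]
    push_cast
    ring
  have hσT : ∀ i ∈ T, (sigmaFlip p) i ∈ T := by
    intro i hi
    rw [hmemT]; intro j
    show p - 1 - i j < p
    clear hfiber hScard hcast
    omega
  have hσσ : ∀ i ∈ T, (sigmaFlip p) ((sigmaFlip p) i) = i := by
    intro i hi
    funext j
    have := (hmemT i).1 hi j
    show p - 1 - (p - 1 - i j) = i j
    clear hfiber hScard hcast
    omega
  have hreindex : ∑ i ∈ T, f i = ∑ i ∈ T, f ((sigmaFlip p) i) :=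
    Finset.sum_nbij' (sigmaFlip p) (sigmaFlip p) hσT hσT hσσ hσσ (fun i hi => by rw [hσσ i hi])
  have hpair : ∀ i ∈ T, f i + f ((sigmaFlip p) i)
      = 2 * ((m : ℤ) + 1) - ((p : ℤ) - 1) * ∑ j, (e j : ℤ) := by
    intro i hi
    have hsig : ∀ j, (((sigmaFlip p) i j : ℕ) : ℤ) = (p : ℤ) - 1 - (i j : ℤ) := by
      intro j
      have := (hmemT i).1 hi j
      show ((p - 1 - i j : ℕ) : ℤ) = (p : ℤ) - 1 - (i j : ℤ)
      clear hfiber hScard hcast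
      omega
    simp only [hf]
    rw [show (∑ j, (((sigmaFlip p) i j : ℕ) : ℤ) * (e j : ℤ))
        = ∑ j, (((p : ℤ) - 1) * (e j : ℤ) - (i j : ℤ) * (e j : ℤ)) from
      Finset.sum_congr rfl fun j _ => by rw [hsig j]; ring]
    rw [Finset.sum_sub_distrib, ← Finset.mul_sum]
    ring
  have hTcard : (T.card : ℤ) = (p : ℤ) ^ r := by
    rw [hT]
    push_cast [Fintype.card_piFinset, Finset.card_range]
    simp
  have main : 2 * (S.card : ℤ)
      = (p : ℤ) ^ r * (2 * ((m : ℤ) + 1) - ((p : ℤ) - 1) * ∑ j, (e j : ℤ)) := by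
    calc 2 * (S.card : ℤ) = ∑ i ∈ T, f i + ∑ i ∈ T, f ((sigmaFlip p) i) := by
          rw [hcast, ← hreindex]; ring
      _ = ∑ i ∈ T, (f i + f ((sigmaFlip p) i)) := Finset.sum_add_distrib.symm
      _ = ∑ _i ∈ T, (2 * ((m : ℤ) + 1) - ((p : ℤ) - 1) * ∑ j, (e j : ℤ)) :=
          Finset.sum_congr rfl hpair
      _ = (T.card : ℤ) * (2 * ((m : ℤ) + 1) - ((p : ℤ) - 1) * ∑ j, (e j : ℤ)) := by
          rw [Finset.sum_const, nsmul_eq_mul]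
      _ = _ := by rw [hTcard]
  rw [hcard, main, hdZ]
  obtain ⟨s, rfl⟩ : ∃ s, r = s + 1 := ⟨r - 1, (Nat.succ_pred_eq_of_pos hr).symm⟩
  simp only [Nat.add_sub_cancel, pow_succ]
  ring
end

section
/- Let p be a prime and K a number field with ring of integers O_K. Let F be a formal power series in K[[X]] with constant coefficient 1 such that every coefficient of the power series F^p lies in O_K. Then for every integer k ≥ 1, p^{2k−1} times the coefficient of X^k in F lies in O_K. -/
open PowerSeries Finset

/-- Let `p` be a prime and `K` a number field with ring of integers `O_K`.
Let `F ∈ K⟦X⟧` be a formal power series with constant coefficient `1` such that every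
coefficient of `F^p` is an algebraic integer (i.e. lies in `O_K`). Then for every `k ≥ 1`,
`p^(2k-1)` times the coefficient of `X^k` in `F` is an algebraic integer. -/
theorem pow_mul_coeff_isIntegral_of_pow_coeff_isIntegral
    (p : ℕ) (hp : p.Prime) (K : Type*) [Field K] [NumberField K]
    (F : PowerSeries K) (hF0 : PowerSeries.constantCoeff F = 1)
    (hFp : ∀ k : ℕ, IsIntegral ℤ (PowerSeries.coeff k (F ^ p))) :
    ∀ k : ℕ, 1 ≤ k → IsIntegral ℤ ((p : K) ^ (2 * k - 1) * PowerSeries.coeff k F) := by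
  have hpInt : IsIntegral ℤ ((p : K)) := by
    simpa using isIntegral_algebraMap (R := ℤ) (A := K) (x := (p : ℤ))
  intro k
  induction k using Nat.strong_induction_on with
  | _ k IH =>
  intro hk
  set S2 : Finset (ℕ →₀ ℕ) :=
    (finsuppAntidiag (range p) k).filter (fun l => 2 ≤ l.support.card) with hS2
  -- products over `range p` reduce to products over the support
  have hprod : ∀ l ∈ finsuppAntidiag (range p) k,
      ∏ i ∈ range p, coeff (l i) F = ∏ i ∈ l.support, coeff (l i) F := by
    intro l hl
    rw [mem_finsuppAntidiag] at hl
    refine (Finset.prod_subset hl.2 ?_).symm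
    intro i _ hi
    rw [Finsupp.notMem_support_iff.mp hi]
    simpa using hF0
  -- the set of `l` with support of size ≤ 1
  have himg : (finsuppAntidiag (range p) k).filter (fun l => l.support.card ≤ 1)
      = (range p).image (fun i => Finsupp.single i k) := by
    ext l
    simp only [mem_filter, mem_finsuppAntidiag, mem_image, mem_range]
    constructor
    · rintro ⟨⟨hsum, hsupp⟩, hcard⟩
      have hne : l.support.Nonempty := by
        rcases Finset.eq_empty_or_nonempty l.support with h | h
        · exfalso
          have : l = 0 := Finsupp.support_eq_empty.mp h
          rw [this] at hsum
          simp at hsum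
          omega
        · exact h
      obtain ⟨i, hi⟩ := Finset.card_eq_one.mp (le_antisymm hcard hne.card_pos)
      refine ⟨i, ?_, ?_⟩
      · have : i ∈ l.support := by rw [hi]; exact Finset.mem_singleton_self i
        exact mem_range.mp (hsupp this)
      · have hsub : l.support ⊆ {i} := by rw [hi]
        have hli : l i = k := by
          rw [← hsum, ← Finset.sum_subset hsupp
            (fun j _ hj => Finsupp.notMem_support_iff.mp hj), hi, Finset.sum_singleton]
        exact (Finsupp.eq_single_iff.mpr ⟨hsub, hli⟩).symm
    · rintro ⟨i, hi, rfl⟩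
      have hk0 : k ≠ 0 := by omega
      have hsupp : (Finsupp.single i k).support = {i} := Finsupp.support_single_ne_zero i hk0
      refine ⟨⟨?_, ?_⟩, ?_⟩
      · rw [Finset.sum_eq_single_of_mem i (mem_range.mpr hi)]
        · simp
        · intro j _ hj
          exact Finsupp.single_eq_of_ne hj
      · rw [hsupp]
        simpa using mem_range.mpr hi
      · rw [hsupp]; simp
  -- split the coefficient formula
  have hsplit : coeff k (F ^ p)
      = (p : K) * coeff k F + ∑ l ∈ S2, ∏ i ∈ l.support, coeff (l i) F := by
    rw [coeff_pow]
    rw [← Finset.sum_filter_add_sum_filter_not (finsuppAntidiag (range p) k)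
      (fun l => l.support.card ≤ 1)]
    congr 1
    · rw [himg, Finset.sum_image
        (fun i _ j _ h => Finsupp.single_left_injective (by omega : k ≠ 0) h)]
      have h1 : ∀ i ∈ range p,
          ∏ j ∈ range p, coeff ((Finsupp.single i k) j) F = coeff k F := by
        intro i hi
        rw [Finset.prod_eq_single_of_mem i hi]
        · simp
        · intro j _ hj
          rw [Finsupp.single_eq_of_ne hj]
          simpa using hF0
      rw [Finset.sum_congr rfl h1, Finset.sum_const, card_range, nsmul_eq_mul]
    · have heq : filter (fun l => ¬ l.support.card ≤ 1) (finsuppAntidiag (range p) k) = S2 := by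
        rw [hS2]
        apply Finset.filter_congr
        intro l _
        simp only [not_le]
        constructor <;> omega
      rw [heq]
      refine Finset.sum_congr rfl ?_
      intro l hl
      exact hprod l (Finset.mem_filter.mp (hS2 ▸ hl)).1
  have h21 : (p : K) ^ (2 * k - 1) = (p : K) ^ (2 * k - 2) * p := by
    rw [← pow_succ]
    congr 1
    omega
  have key : (p : K) ^ (2 * k - 1) * coeff k F
      = (p : K) ^ (2 * k - 2) * coeff k (F ^ p)
        - ∑ l ∈ S2, (p : K) ^ (2 * k - 2) * ∏ i ∈ l.support, coeff (l i) F := by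
    rw [hsplit, ← Finset.mul_sum, h21]
    ring
  rw [key]
  refine IsIntegral.sub ((hpInt.pow _).mul (hFp k)) (IsIntegral.sum _ ?_)
  intro l hl
  rw [hS2, mem_filter, mem_finsuppAntidiag] at hl
  obtain ⟨⟨hsum, hsupp⟩, hcard⟩ := hl
  have hsum' : ∑ i ∈ l.support, l i = k := by
    rw [← hsum]
    exact Finset.sum_subset hsupp (fun j _ hj => Finsupp.notMem_support_iff.mp hj)
  have hpos : ∀ i ∈ l.support, 1 ≤ l i :=
    fun i hi => Nat.one_le_iff_ne_zero.mpr (Finsupp.mem_support_iff.mp hi)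
  have hlt : ∀ i ∈ l.support, l i < k := by
    intro i hi
    obtain ⟨j, hj, hji⟩ := Finset.exists_mem_ne hcard i
    have h1 : l j ≤ ∑ x ∈ l.support.erase i, l x :=
      Finset.single_le_sum (fun _ _ => Nat.zero_le _) (Finset.mem_erase.mpr ⟨hji, hj⟩)
    have h2 : ∑ x ∈ l.support.erase i, l x + l i = k := by
      rw [Finset.sum_erase_add _ _ hi, hsum']
    have := hpos j hj
    omega
  have hexp : ∑ i ∈ l.support, (2 * l i - 1) = 2 * k - l.support.card := by
    have h1 : ∀ i ∈ l.support, (2 * l i - 1) + 1 = 2 * l i := fun i hi => by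
      have := hpos i hi; omega
    have h2 : (∑ i ∈ l.support, (2 * l i - 1)) + l.support.card = 2 * k := by
      rw [Finset.card_eq_sum_ones, ← Finset.sum_add_distrib,
        Finset.sum_congr rfl h1, ← Finset.mul_sum, hsum']
    omega
  have hrk : l.support.card ≤ k := by
    calc l.support.card = ∑ _i ∈ l.support, 1 := by simp
    _ ≤ ∑ i ∈ l.support, l i := Finset.sum_le_sum hpos
    _ = k := hsum'
  have hK : (p : K) ^ (2 * k - 2) * ∏ i ∈ l.support, coeff (l i) F
      = (p : K) ^ (l.support.card - 2) *
        ∏ i ∈ l.support, ((p : K) ^ (2 * l i - 1) * coeff (l i) F) := by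
    rw [Finset.prod_mul_distrib, Finset.prod_pow_eq_pow_sum, hexp, ← mul_assoc, ← pow_add]
    congr 2
    omega
  rw [hK]
  exact (hpInt.pow _).mul (IsIntegral.prod _ (fun i hi => IH (l i) (hlt i hi) (hpos i hi)))
end

section
/- Let p be a prime and l ≥ 1 an integer. Then p^{2l−1}·binom(1/p, l) is an integer, where binom(1/p, l) denotes the generalized binomial coefficient (1/p)·(1/p − 1)·(1/p − 2)⋯(1/p − l + 1) / l! ∈ ℚ. -/
open Finset

private lemma descPoch_eval_prod (k : ℕ) (c : ℤ) :
    (descPochhammer ℤ k).eval c = ∏ i ∈ Finset.range k, (c - i) := by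
  induction k with
  | zero => simp [descPochhammer_zero]
  | succ n ih => rw [descPochhammer_succ_eval, ih, Finset.prod_range_succ]

private lemma factorial_dvd_prod_sub (k : ℕ) (c : ℤ) :
    (k.factorial : ℤ) ∣ ∏ i ∈ Finset.range k, (c - i) := by
  rw [← descPoch_eval_prod, Polynomial.eval_eq_smeval,
    Ring.descPochhammer_eq_factorial_smul_choose c k, nsmul_eq_mul]
  exact Dvd.intro _ rfl

private lemma key_dvd (p l : ℕ) (hp : p.Prime) (hl : 1 ≤ l) :
    (l.factorial : ℤ) ∣ (p : ℤ) ^ (l - 1) * ∏ i ∈ Finset.range l, (1 - (i : ℤ) * p) := by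
  haveI : Fact p.Prime := ⟨hp⟩
  set α := (l.factorial).factorization p with hαdef
  set m := ordCompl[p] l.factorial with hmdef
  have hfacne : l.factorial ≠ 0 := Nat.factorial_ne_zero l
  have hfac : p ^ α * m = l.factorial := Nat.ordProj_mul_ordCompl_eq_self _ _
  have hcop : Nat.Coprime p m := Nat.coprime_ordCompl hp hfacne
  have hmdvd : m ∣ l.factorial := Nat.ordCompl_dvd _ _
  -- α ≤ l - 1
  have hαv : α = padicValNat p l.factorial := Nat.factorization_def _ hp
  have hα : α ≤ l - 1 := by
    have hleg := sub_one_mul_padicValNat_factorial (p := p) l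
    have hdig : 1 ≤ (p.digits l).sum := by
      have hne : p.digits l ≠ [] := Nat.digits_ne_nil_iff_ne_zero.mpr (by omega)
      have hmem := List.getLast_mem hne
      have hlast := Nat.getLast_digit_ne_zero p (m := l) (by omega)
      have := List.single_le_sum (fun x (_ : x ∈ p.digits l) => Nat.zero_le x) _ hmem
      omega
    have h2 : 2 ≤ p := hp.two_le
    have : padicValNat p l.factorial ≤ (p - 1) * padicValNat p l.factorial :=
      Nat.le_mul_of_pos_left _ (by omega)
    omega
  -- m divides the product
  have hm : (m : ℤ) ∣ ∏ i ∈ Finset.range l, (1 - (i : ℤ) * p) := by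
    rcases Nat.lt_or_ge m 2 with hm2 | hm2
    · have hm0 : m ≠ 0 := by
        intro h; rw [h, mul_zero] at hfac; exact hfacne hfac.symm
      have hm1 : m = 1 := by
        interval_cases m
        · exact absurd rfl hm0
        · rfl
      rw [hm1]; exact one_dvd _
    · obtain ⟨c, -, hc⟩ := Nat.exists_mul_mod_eq_one_of_coprime hcop hm2
      have hpc : ((p : ZMod m)) * (c : ZMod m) = 1 := by
        have : ((p * c : ℕ) : ZMod m) = ((1 : ℕ) : ZMod m) := by
          rw [(ZMod.natCast_eq_natCast_iff _ _ _)]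
          show p * c % m = 1 % m
          rw [hc, Nat.one_mod_eq_one.mpr (by omega)]
        push_cast at this
        exact this
      rw [← ZMod.intCast_zmod_eq_zero_iff_dvd]
      push_cast
      -- the product of (c - i) vanishes mod m
      have hzero : ∏ i ∈ Finset.range l, ((c : ZMod m) - i) = 0 := by
        have hdvd : (m : ℤ) ∣ ∏ i ∈ Finset.range l, ((c : ℤ) - i) :=
          dvd_trans (Int.natCast_dvd_natCast.mpr hmdvd) (factorial_dvd_prod_sub l c)
        have := (ZMod.intCast_zmod_eq_zero_iff_dvd _ m).mpr hdvd
        push_cast at this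
        exact this
      have hcu : IsUnit ((c : ZMod m)) := IsUnit.of_mul_eq_one _ (by rw [mul_comm]; exact hpc)
      have hcpow : (c : ZMod m) ^ l = ∏ _i ∈ Finset.range l, (c : ZMod m) := by
        rw [Finset.prod_const, Finset.card_range]
      have hkey : (∏ i ∈ Finset.range l, (1 - (i : ZMod m) * p)) * (c : ZMod m) ^ l = 0 := by
        rw [hcpow, ← Finset.prod_mul_distrib, ← hzero]
        refine Finset.prod_congr rfl fun i _ => ?_
        have : (1 - (i : ZMod m) * p) * c = c - i * (p * c) := by ring
        rw [this, hpc, mul_one]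
      exact (hcu.pow l).mul_left_eq_zero.mp hkey
  -- assemble
  have hppow : ((p : ℤ) ^ α) ∣ (p : ℤ) ^ (l - 1) := pow_dvd_pow _ hα
  have hcop' : IsCoprime ((p : ℤ) ^ α) (m : ℤ) := by
    rw [← Nat.cast_pow]
    exact Nat.isCoprime_iff_coprime.mpr (Nat.Coprime.pow_left α hcop)
  have : ((p : ℤ) ^ α * m) ∣ (p : ℤ) ^ (l - 1) * ∏ i ∈ Finset.range l, (1 - (i : ℤ) * p) :=
    hcop'.mul_dvd (hppow.mul_right _) (hm.mul_left _)
  calc (l.factorial : ℤ) = (p : ℤ) ^ α * m := by exact_mod_cast hfac.symm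
    _ ∣ _ := this

/-- Let `p` be a prime and `l ≥ 1` an integer. Then
`p^(2l-1) * binom(1/p, l)` is an integer, where `binom(1/p, l)` is the generalized
binomial coefficient `(1/p)(1/p - 1)⋯(1/p - l + 1)/l!`. -/
theorem pow_mul_genBinomial_one_div_prime_isInteger
    (p : ℕ) (hp : p.Prime) (l : ℕ) (hl : 1 ≤ l) :
    ∃ z : ℤ, (p : ℚ) ^ (2 * l - 1) *
      ((∏ i ∈ Finset.range l, ((1 : ℚ) / p - i)) / l.factorial) = z := by
  set N : ℤ := (p : ℤ) ^ (l - 1) * ∏ i ∈ Finset.range l, (1 - (i : ℤ) * p) with hN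
  have hdvd : (l.factorial : ℤ) ∣ N := key_dvd p l hp hl
  refine ⟨N / l.factorial, ?_⟩
  have hfacne : ((l.factorial : ℚ)) ≠ 0 := by exact_mod_cast l.factorial_ne_zero
  have hpne : (p : ℚ) ≠ 0 := by exact_mod_cast hp.pos.ne'
  have hcast : ((N / l.factorial : ℤ) : ℚ) = (N : ℚ) / (l.factorial : ℚ) := by
    obtain ⟨k, hk⟩ := hdvd
    rw [hk, Int.mul_ediv_cancel_left _ (by exact_mod_cast l.factorial_ne_zero)]
    push_cast
    rw [mul_comm, mul_div_assoc, div_self hfacne, mul_one]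
  rw [hcast, hN]
  push_cast
  rw [← mul_div_assoc]
  congr 1
  have hppow : (p : ℚ) ^ l = ∏ _i ∈ Finset.range l, (p : ℚ) := by
    rw [Finset.prod_const, Finset.card_range]
  have hprod : (∏ i ∈ Finset.range l, ((1 : ℚ) / p - i)) * (p : ℚ) ^ l
      = ∏ i ∈ Finset.range l, (1 - (i : ℚ) * p) := by
    rw [hppow, ← Finset.prod_mul_distrib]
    exact Finset.prod_congr rfl fun i _ => by field_simp
  have hexp : 2 * l - 1 = (l - 1) + l := by omega
  rw [hexp, pow_add, ← hprod]
  ring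
end
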